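/- Let 1 ≤ p < ∞ and let Γ be a set of cardinality 2^{ℵ₁}. Let {e_i : i ∈ Γ} be the canonical generalized Schauder basis of ℓ_p(Γ), fix i₀, i₁ ∈ Γ, and write {e_i : i ∈ Γ} \ {e_{i₀}, e_{i₁}} = ⋃_{(λ,μ)∈ℝ²} A_{(λ,μ)} as a pairwise disjoint union with each A_{(λ,μ)} of cardinality 2^{ℵ₁}. Define A = ⋃_{(λ,μ)∈ℝ²} span({λ e_{i₀} + μ e_{i₁}} ∪ A_{(λ,μ)}). Then there is no vector subspace W of ℓ_p(Γ) with dim W = 2^{ℵ₁} and span{e_{i₀}, e_{i₁}} ⊆ W ⊆ A ∪ {0}; in particular A is not (2, 2^{ℵ₁})-lineable, although A is (1, 2^{ℵ₁})-lineable. -/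

import Mathlib

open Cardinal Classical
open scoped ENNReal

private def coordMap (p : ℝ≥0∞) [Fact (1 ≤ p)] {Γ : Type} (j : Γ) :
    lp (fun _ : Γ => ℝ) p →ₗ[ℝ] ℝ where
  toFun x := x j
  map_add' x y := by
    change (⇑(x + y) : Γ → ℝ) j = (⇑x : Γ → ℝ) j + (⇑y : Γ → ℝ) j
    rw [lp.coeFn_add]; rfl
  map_smul' c x := by
    change (⇑(c • x) : Γ → ℝ) j = c * (⇑x : Γ → ℝ) j
    rw [lp.coeFn_smul]; rfl

private lemma indepE (p : ℝ≥0∞) [Fact (1 ≤ p)] {Γ : Type} [DecidableEq Γ] :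
    LinearIndependent ℝ (fun i : Γ => lp.single p i (1 : ℝ)) := by
  rw [linearIndependent_iff']
  intro s g h i hi
  have h2 := congrArg (coordMap p i) h
  rw [map_sum, map_zero] at h2
  have hterm : ∀ k, coordMap p i (g k • lp.single p k (1 : ℝ)) = if i = k then g k else 0 := by
    intro k
    rw [map_smul]
    by_cases hk : i = k
    · subst hk; simp [coordMap, lp.single_apply_self]
    · simp [coordMap, lp.single_apply_ne p k 1 hk, hk]
  rw [Finset.sum_congr rfl (fun k _ => hterm k), Finset.sum_ite_eq] at h2
  simpa [hi] using h2

set_option maxHeartbeats 1000000 in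
set_option synthInstance.maxHeartbeats 200000 in
theorem stmt9 (p : ℝ≥0∞) [Fact (1 ≤ p)] (hp : p ≠ ⊤)
    (Γ : Type) [DecidableEq Γ] (hΓ : #Γ = 2 ^ aleph 1) (i₀ i₁ : Γ) (hi : i₀ ≠ i₁)
    (E : Γ → lp (fun _ : Γ => ℝ) p) (hE : ∀ i, E i = lp.single p i (1 : ℝ))
    (𝒜 : ℝ × ℝ → Set (lp (fun _ : Γ => ℝ) p))
    (h𝒜disj : Pairwise (Function.onFun Disjoint 𝒜))
    (h𝒜card : ∀ z : ℝ × ℝ, #(𝒜 z) = 2 ^ aleph 1)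
    (h𝒜cover : (⋃ z : ℝ × ℝ, 𝒜 z) = (Set.range E) \ {E i₀, E i₁})
    (A : Set (lp (fun _ : Γ => ℝ) p))
    (hA : A = ⋃ z : ℝ × ℝ,
      (Submodule.span ℝ ({z.1 • E i₀ + z.2 • E i₁} ∪ 𝒜 z) : Set (lp (fun _ : Γ => ℝ) p))) :
    (¬ ∃ W : Submodule ℝ (lp (fun _ : Γ => ℝ) p),
        Module.rank ℝ W = 2 ^ aleph 1 ∧
        Submodule.span ℝ {E i₀, E i₁} ≤ W ∧ (W : Set (lp (fun _ : Γ => ℝ) p)) ⊆ A ∪ {0}) ∧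
    (¬ ((∃ W : Submodule ℝ (lp (fun _ : Γ => ℝ) p),
          Module.rank ℝ W = 2 ∧ (W : Set (lp (fun _ : Γ => ℝ) p)) ⊆ A ∪ {0}) ∧
        (∀ W : Submodule ℝ (lp (fun _ : Γ => ℝ) p),
          Module.rank ℝ W = 2 → (W : Set (lp (fun _ : Γ => ℝ) p)) ⊆ A ∪ {0} →
          ∃ W' : Submodule ℝ (lp (fun _ : Γ => ℝ) p), Module.rank ℝ W' = 2 ^ aleph 1 ∧
            W ≤ W' ∧ (W' : Set (lp (fun _ : Γ => ℝ) p)) ⊆ A ∪ {0}))) ∧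
    ((∃ W : Submodule ℝ (lp (fun _ : Γ => ℝ) p),
        Module.rank ℝ W = 1 ∧ (W : Set (lp (fun _ : Γ => ℝ) p)) ⊆ A ∪ {0}) ∧
      (∀ W : Submodule ℝ (lp (fun _ : Γ => ℝ) p),
        Module.rank ℝ W = 1 → (W : Set (lp (fun _ : Γ => ℝ) p)) ⊆ A ∪ {0} →
        ∃ W' : Submodule ℝ (lp (fun _ : Γ => ℝ) p), Module.rank ℝ W' = 2 ^ aleph 1 ∧
          W ≤ W' ∧ (W' : Set (lp (fun _ : Γ => ℝ) p)) ⊆ A ∪ {0})) := by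
  -- basic coordinate lemmas
  have coordAdd : ∀ (u v : lp (fun _ : Γ => ℝ) p) (j : Γ), (u + v) j = u j + v j :=
    fun u v j => by rw [lp.coeFn_add]; rfl
  have coordSmul : ∀ (c : ℝ) (u : lp (fun _ : Γ => ℝ) p) (j : Γ), (c • u) j = c * u j :=
    fun c u j => by rw [lp.coeFn_smul]; rfl
  have coordZero : ∀ j : Γ, (0 : lp (fun _ : Γ => ℝ) p) j = 0 :=
    fun j => by rw [lp.coeFn_zero]; rfl
  have hEd : ∀ k, E k k = 1 := fun k => by rw [hE]; exact lp.single_apply_self p k 1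
  have hEc : ∀ (k j : Γ), j ≠ k → E k j = 0 :=
    fun k j h => by rw [hE]; exact lp.single_apply_ne p k 1 h
  have hEinj : Function.Injective E := by
    intro a b hab
    by_contra hne
    have h1 : E a b = E b b := by rw [hab]
    rw [hEc a b (fun h => hne h.symm), hEd b] at h1
    exact zero_ne_one h1
  have hfam : LinearIndependent ℝ E := by
    have h := indepE p (Γ := Γ)
    rwa [show (fun i : Γ => lp.single p i (1 : ℝ)) = E from funext fun i => (hE i).symm] at h
  have hindepRange : LinearIndependent ℝ (fun x : Set.range E => (x : lp (fun _ : Γ => ℝ) p)) :=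
    (linearIndepOn_id_range_iff hEinj).mpr hfam
  have hne0 : ∀ (x : lp (fun _ : Γ => ℝ) p) (j : Γ), x j ≠ 0 → x ≠ 0 := by
    intro x j hx h; exact hx (h ▸ coordZero j)
  -- key structural lemma
  have key : ∀ (z : ℝ × ℝ) (x : lp (fun _ : Γ => ℝ) p),
      x ∈ Submodule.span ℝ ({z.1 • E i₀ + z.2 • E i₁} ∪ 𝒜 z) →
      (∃ t : ℝ, x i₀ = t * z.1 ∧ x i₁ = t * z.2) ∧
      (∀ j, j ≠ i₀ → j ≠ i₁ → x j ≠ 0 → E j ∈ 𝒜 z) := by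
    intro z x hx
    rw [Set.singleton_union, Submodule.mem_span_insert] at hx
    obtain ⟨a, y, hy, rfl⟩ := hx
    have hy' : y i₀ = 0 ∧ y i₁ = 0 ∧ ∀ j, y j ≠ 0 → E j ∈ 𝒜 z := by
      refine Submodule.span_induction ?_ ?_ ?_ ?_ hy
      · intro v hv
        have hv' : v ∈ Set.range E \ ({E i₀, E i₁} : Set _) := by
          rw [← h𝒜cover]; exact Set.mem_iUnion.mpr ⟨z, hv⟩
        obtain ⟨⟨k, rfl⟩, hne⟩ := hv'
        simp only [Set.mem_insert_iff, Set.mem_singleton_iff, not_or] at hne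
        refine ⟨hEc k i₀ (fun h => hne.1 (by rw [h])),
          hEc k i₁ (fun h => hne.2 (by rw [h])), fun j hj => ?_⟩
        have hjk : j = k := by
          by_contra h; exact hj (hEc k j h)
        rw [hjk]; exact hv
      · exact ⟨coordZero i₀, coordZero i₁, fun j hj => absurd (coordZero j) hj⟩
      · rintro u v hu hv ⟨hu0, hu1, hu2⟩ ⟨hv0, hv1, hv2⟩
        refine ⟨by rw [coordAdd, hu0, hv0, add_zero], by rw [coordAdd, hu1, hv1, add_zero],
          fun j hj => ?_⟩
        rw [coordAdd] at hj
        by_cases h : u j = 0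
        · exact hv2 j (fun h' => hj (by rw [h, h', add_zero]))
        · exact hu2 j h
      · rintro c u hu ⟨hu0, hu1, hu2⟩
        refine ⟨by rw [coordSmul, hu0, mul_zero], by rw [coordSmul, hu1, mul_zero],
          fun j hj => ?_⟩
        rw [coordSmul] at hj
        exact hu2 j (fun h => hj (by rw [h, mul_zero]))
    constructor
    · refine ⟨a, ?_, ?_⟩
      · rw [coordAdd, coordSmul, coordAdd, coordSmul, coordSmul, hEd i₀, hEc i₁ i₀ hi,
          hy'.1]; ring
      · rw [coordAdd, coordSmul, coordAdd, coordSmul, coordSmul, hEd i₁,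
          hEc i₀ i₁ (fun h => hi h.symm), hy'.2.1]; ring
    · intro j hj0 hj1 hj
      rw [coordAdd, coordSmul, coordAdd, coordSmul, coordSmul, hEc i₀ j hj0, hEc i₁ j hj1] at hj
      exact hy'.2.2 j (fun h => hj (by rw [h]; ring))
  -- representation of vectors supported on {i₀, i₁}
  have hrepr : ∀ x : lp (fun _ : Γ => ℝ) p, (∀ j, j ≠ i₀ → j ≠ i₁ → x j = 0) →
      x = x i₀ • E i₀ + x i₁ • E i₁ := by
    intro x h
    apply lp.ext
    funext j
    rw [coordAdd, coordSmul, coordSmul]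
    by_cases h0 : j = i₀
    · subst h0; rw [hEd j, hEc i₁ j hi, mul_one, mul_zero, add_zero]
    · by_cases h1 : j = i₁
      · subst h1; rw [hEd j, hEc i₀ j h0, mul_one, mul_zero, zero_add]
      · rw [h j h0 h1, hEc i₀ j h0, hEc i₁ j h1, mul_zero, mul_zero, add_zero]
  -- core of part 1
  have part1 : ∀ W : Submodule ℝ (lp (fun _ : Γ => ℝ) p),
      Submodule.span ℝ {E i₀, E i₁} ≤ W → (W : Set (lp (fun _ : Γ => ℝ) p)) ⊆ A ∪ {0} →
      W ≤ Submodule.span ℝ {E i₀, E i₁} := by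
    intro W hle hsub w hw
    by_cases hzero : ∀ j, j ≠ i₀ → j ≠ i₁ → w j = 0
    · rw [hrepr w hzero]
      exact Submodule.add_mem _
        (Submodule.smul_mem _ _ (Submodule.subset_span (by left; rfl)))
        (Submodule.smul_mem _ _ (Submodule.subset_span (by right; rfl)))
    · exfalso
      push_neg at hzero
      obtain ⟨j, hj0, hj1, hjw⟩ := hzero
      have he₀W : E i₀ ∈ W := hle (Submodule.subset_span (by left; rfl))
      have he₁W : E i₁ ∈ W := hle (Submodule.subset_span (by right; rfl))
      have getz : ∀ x : lp (fun _ : Γ => ℝ) p, x ∈ W → x j ≠ 0 →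
          ∃ (z : ℝ × ℝ) (t : ℝ), E j ∈ 𝒜 z ∧ x i₀ = t * z.1 ∧ x i₁ = t * z.2 := by
        intro x hxW hxj
        have hxA : x ∈ A := by
          rcases hsub hxW with h | h
          · exact h
          · exact absurd h (hne0 x j hxj)
        rw [hA] at hxA
        obtain ⟨z, hz⟩ := Set.mem_iUnion.mp hxA
        obtain ⟨⟨t, ht0, ht1⟩, hmem⟩ := key z x hz
        exact ⟨z, t, hmem j hj0 hj1 hxj, ht0, ht1⟩
      obtain ⟨z₀, t₀, hm₀, h₀₀, h₀₁⟩ := getz w hw hjw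
      have hw1j : (w + E i₀) j ≠ 0 := by
        rw [coordAdd, hEc i₀ j hj0, add_zero]; exact hjw
      have hw2j : (w + E i₁) j ≠ 0 := by
        rw [coordAdd, hEc i₁ j hj1, add_zero]; exact hjw
      obtain ⟨z₁, t₁, hm₁, h₁₀, h₁₁⟩ := getz (w + E i₀) (W.add_mem hw he₀W) hw1j
      obtain ⟨z₂, t₂, hm₂, h₂₀, h₂₁⟩ := getz (w + E i₁) (W.add_mem hw he₁W) hw2j
      have hz₁ : z₁ = z₀ := by
        by_contra h
        exact Set.disjoint_left.mp (h𝒜disj h) hm₁ hm₀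
      have hz₂ : z₂ = z₀ := by
        by_contra h
        exact Set.disjoint_left.mp (h𝒜disj h) hm₂ hm₀
      rw [hz₁] at h₁₀ h₁₁
      rw [hz₂] at h₂₀ h₂₁
      rw [coordAdd, hEd i₀] at h₁₀
      rw [coordAdd, hEc i₀ i₁ (fun h => hi h.symm), add_zero] at h₁₁
      rw [coordAdd, hEc i₁ i₀ hi, add_zero] at h₂₀
      rw [coordAdd, hEd i₁] at h₂₁
      have e1 : (t₁ - t₀) * z₀.1 = 1 := by linear_combination h₀₀ - h₁₀
      have e2 : (t₁ - t₀) * z₀.2 = 0 := by linear_combination h₀₁ - h₁₁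
      have e3 : (t₂ - t₀) * z₀.1 = 0 := by linear_combination h₀₀ - h₂₀
      have e4 : (t₂ - t₀) * z₀.2 = 1 := by linear_combination h₀₁ - h₂₁
      have : (1 : ℝ) = 0 := by
        calc (1 : ℝ) = ((t₁ - t₀) * z₀.1) * ((t₂ - t₀) * z₀.2) := by rw [e1, e4]; ring
          _ = ((t₁ - t₀) * z₀.2) * ((t₂ - t₀) * z₀.1) := by ring
          _ = 0 := by rw [e2, e3]; ring
      exact one_ne_zero this
  -- part 1 : nonexistence
  have h2lt : (2 : Cardinal) < 2 ^ aleph 1 := by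
    calc (2 : Cardinal) < ℵ₀ := by exact_mod_cast nat_lt_aleph0 2
      _ ≤ aleph 1 := aleph0_le_aleph 1
      _ < 2 ^ aleph 1 := cantor _
  have noW : ¬ ∃ W : Submodule ℝ (lp (fun _ : Γ => ℝ) p),
      Module.rank ℝ W = 2 ^ aleph 1 ∧
      Submodule.span ℝ {E i₀, E i₁} ≤ W ∧ (W : Set (lp (fun _ : Γ => ℝ) p)) ⊆ A ∪ {0} := by
    rintro ⟨W, hrank, hle, hsub⟩
    have hWle := part1 W hle hsub
    have h2 : Module.rank ℝ W ≤ 2 := by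
      refine (Submodule.rank_mono hWle).trans ((rank_span_le (R := ℝ) _).trans ?_)
      refine (Cardinal.mk_insert_le).trans ?_
      rw [Cardinal.mk_singleton]
      norm_num
    rw [hrank] at h2
    exact absurd h2 (not_le.mpr h2lt)
  refine ⟨noW, ?_, ?_, ?_⟩
  -- part 2
  · rintro ⟨_, hext⟩
    have hindep2 : LinearIndependent ℝ
        (fun x : ({E i₀, E i₁} : Set (lp (fun _ : Γ => ℝ) p)) => (x : lp (fun _ : Γ => ℝ) p)) := by
      refine LinearIndepOn.mono (v := id) hindepRange ?_
      rintro v (rfl | rfl) <;> exact Set.mem_range_self _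
    have hrank2 : Module.rank ℝ (Submodule.span ℝ ({E i₀, E i₁} : Set (lp (fun _ : Γ => ℝ) p))) = 2 := by
      rw [rank_span_set hindep2, Cardinal.mk_insert (by
        simp only [Set.mem_singleton_iff]
        exact fun h => hi (hEinj h)), Cardinal.mk_singleton]
      norm_num
    have hsubA : (Submodule.span ℝ ({E i₀, E i₁} : Set (lp (fun _ : Γ => ℝ) p)) :
        Set (lp (fun _ : Γ => ℝ) p)) ⊆ A ∪ {0} := by
      intro x hx
      rw [SetLike.mem_coe, Submodule.mem_span_pair] at hx
      obtain ⟨s, t, rfl⟩ := hx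
      left
      rw [hA]
      refine Set.mem_iUnion.mpr ⟨(s, t), ?_⟩
      exact Submodule.subset_span (by left; rfl)
    obtain ⟨W', hW'rank, hW'le, hW'sub⟩ := hext _ hrank2 hsubA
    exact noW ⟨W', hW'rank, hW'le, hW'sub⟩
  -- part 3 : existence of a 1-dimensional subspace
  · refine ⟨Submodule.span ℝ {E i₀}, ?_, ?_⟩
    · have hindep1 : LinearIndependent ℝ
          (fun x : ({E i₀} : Set (lp (fun _ : Γ => ℝ) p)) => (x : lp (fun _ : Γ => ℝ) p)) := by
        refine LinearIndepOn.mono (v := id) hindepRange ?_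
        rintro v rfl
        exact Set.mem_range_self _
      rw [rank_span_set hindep1, Cardinal.mk_singleton]
    · intro x hx
      rw [SetLike.mem_coe, Submodule.mem_span_singleton] at hx
      obtain ⟨a, rfl⟩ := hx
      left
      rw [hA]
      refine Set.mem_iUnion.mpr ⟨(a, 0), ?_⟩
      exact Submodule.subset_span (by left; simp)
  -- part 3 : extension
  · intro W hW1 hWsub
    obtain ⟨v₀, hv₀⟩ := (rank_le_one_iff (K := ℝ) (V := W)).mp hW1.le
    have hv₀ne : (v₀ : lp (fun _ : Γ => ℝ) p) ≠ 0 := by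
      intro h
      have hv0 : v₀ = 0 := Subtype.ext h
      have hsing : Subsingleton W := by
        constructor
        intro a b
        obtain ⟨ra, hra⟩ := hv₀ a
        obtain ⟨rb, hrb⟩ := hv₀ b
        rw [← hra, ← hrb, hv0, smul_zero, smul_zero]
      rw [rank_zero_iff.mpr hsing] at hW1
      exact zero_ne_one hW1
    have hv₀A : (v₀ : lp (fun _ : Γ => ℝ) p) ∈ A := by
      rcases hWsub v₀.2 with h | h
      · exact h
      · exact absurd h hv₀ne
    rw [hA] at hv₀A
    obtain ⟨z, hz⟩ := Set.mem_iUnion.mp hv₀A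
    set S : Set (lp (fun _ : Γ => ℝ) p) := {z.1 • E i₀ + z.2 • E i₁} ∪ 𝒜 z with hS
    refine ⟨Submodule.span ℝ S, ?_, ?_, ?_⟩
    · -- rank computation
      have h𝒜sub : 𝒜 z ⊆ Set.range E := by
        intro v hv
        have hv' : v ∈ Set.range E \ ({E i₀, E i₁} : Set _) := by
          rw [← h𝒜cover]; exact Set.mem_iUnion.mpr ⟨z, hv⟩
        exact hv'.1
      have hind : LinearIndependent ℝ
          (fun x : (𝒜 z) => (x : lp (fun _ : Γ => ℝ) p)) := LinearIndepOn.mono (v := id) hindepRange h𝒜sub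
      have haleph : ℵ₀ ≤ (2 : Cardinal) ^ aleph 1 :=
        (aleph0_le_aleph 1).trans (cantor _).le
      apply le_antisymm
      · refine (rank_span_le (R := ℝ) _).trans ?_
        refine (Cardinal.mk_union_le _ _).trans ?_
        rw [Cardinal.mk_singleton, h𝒜card z]
        calc 1 + (2:Cardinal) ^ aleph 1 ≤ 2 ^ aleph 1 + 2 ^ aleph 1 := by
              exact add_le_add_left (one_le_aleph0.trans haleph) _
          _ = 2 ^ aleph 1 := Cardinal.add_eq_self haleph
      · rw [← h𝒜card z, ← rank_span_set hind]
        exact Submodule.rank_mono (Submodule.span_mono Set.subset_union_right)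
    · -- W ≤ span S
      intro x hx
      obtain ⟨r, hr⟩ := hv₀ ⟨x, hx⟩
      have hx' : x = r • (v₀ : lp (fun _ : Γ => ℝ) p) := by
        have := congrArg (Subtype.val) hr
        exact this.symm
      rw [hx']
      exact Submodule.smul_mem _ r hz
    · intro x hx
      left
      rw [hA]
      exact Set.mem_iUnion.mpr ⟨z, hx⟩
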